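/- If A ∈ gl(n, ℂ) has no two distinct eigenvalues differing by a non-zero integer, then the Jordan normal form of exp(2πi A) is determined by that of A: for every eigenvalue λ of A and every k ≥ 1, rank((A − λI)^k) − rank((A − λI)^{k+1}) equals rank((exp(2πiA) − e^{2πiλ}I)^k) − rank((exp(2πiA) − e^{2πiλ}I)^{k+1}); in particular exp(2πiA) is conjugate to exp(2πiJ) where J is the Jordan form of A. -/

import Mathlib

open Polynomial Matrix

noncomputable section Stmt14Aux

open NormedSpace

/-- The entire function `(exp z - 1)/z` applied to an element of a topological algebra. -/
def stmtPhi {𝔸 : Type*} [Ring 𝔸] [Module ℂ 𝔸] [TopologicalSpace 𝔸] (x : 𝔸) : 𝔸 :=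
  ∑' k : ℕ, (((k + 1).factorial : ℂ))⁻¹ • x ^ k

section Generic

variable {𝔸 : Type*} [NormedRing 𝔸] [NormedAlgebra ℂ 𝔸] [CompleteSpace 𝔸]

lemma summable_stmtPhi (x : 𝔸) :
    Summable fun k : ℕ => (((k + 1).factorial : ℂ))⁻¹ • x ^ k := by
  refine .of_norm_bounded_eventually (Real.summable_pow_div_factorial ‖x‖) ?_
  filter_upwards [Filter.eventually_cofinite_ne 0] with k hk
  rw [norm_smul, mul_comm, norm_inv, RCLike.norm_natCast, ← div_eq_mul_inv]
  exact div_le_div₀ (pow_nonneg (norm_nonneg _) k) (norm_pow_le' x (zero_lt_iff.mpr hk))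
    (mod_cast Nat.factorial_pos k) (mod_cast Nat.factorial_le (lt_add_one k).le)

lemma exp_eq_one_add_mul_stmtPhi (x : 𝔸) : exp x = 1 + x * stmtPhi x := by
  rw [exp_eq_tsum ℂ]
  convert (expSeries_summable' (𝕂 := ℂ) x).tsum_eq_zero_add
  · simp
  · symm
    simpa only [mul_smul_comm, pow_succ', stmtPhi] using (summable_stmtPhi x).tsum_mul_left x

lemma commute_stmtPhi {x y : 𝔸} (h : Commute y x) : Commute y (stmtPhi x) := by
  have h1 : y * stmtPhi x = ∑' k : ℕ, y * ((((k + 1).factorial : ℂ))⁻¹ • x ^ k) :=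
    ((summable_stmtPhi x).tsum_mul_left y).symm
  have h2 : stmtPhi x * y = ∑' k : ℕ, ((((k + 1).factorial : ℂ))⁻¹ • x ^ k) * y :=
    ((summable_stmtPhi x).tsum_mul_right y).symm
  unfold Commute SemiconjBy
  rw [h1, h2]
  refine tsum_congr fun k => ?_
  rw [mul_smul_comm, smul_mul_assoc, (h.pow_right k).eq]

end Generic

lemma stmtPhi_zero {𝔸 : Type*} [NormedRing 𝔸] [NormedAlgebra ℂ 𝔸] [T2Space 𝔸] :
    stmtPhi (0 : 𝔸) = 1 := by
  rw [stmtPhi, tsum_eq_single 0]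
  · simp
  · intro k hk
    simp [zero_pow hk]

lemma stmtPhi_complex_exp (z : ℂ) : Complex.exp z = 1 + z * stmtPhi z := by
  rw [Complex.exp_eq_exp_ℂ]
  exact exp_eq_one_add_mul_stmtPhi z

variable {n : ℕ}

lemma stmt_commute_phi {X Y : Matrix (Fin n) (Fin n) ℂ} (h : Commute Y X) :
    Commute Y (stmtPhi X) := by
  letI : SeminormedRing (Matrix (Fin n) (Fin n) ℂ) := Matrix.linftyOpSemiNormedRing
  letI : NormedRing (Matrix (Fin n) (Fin n) ℂ) := Matrix.linftyOpNormedRing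
  letI : NormedAlgebra ℂ (Matrix (Fin n) (Fin n) ℂ) := Matrix.linftyOpNormedAlgebra
  exact commute_stmtPhi h

lemma stmt_pow_mulVec {N : Matrix (Fin n) (Fin n) ℂ} {w : Fin n → ℂ} {ν : ℂ}
    (hw : N.mulVec w = ν • w) (k : ℕ) : (N ^ k).mulVec w = ν ^ k • w := by
  induction k with
  | zero => simp [Matrix.one_mulVec]
  | succ k ih =>
      rw [pow_succ', ← Matrix.mulVec_mulVec, ih, Matrix.mulVec_smul, hw,
        smul_smul, ← pow_succ]

lemma stmt_mulVec_stmtPhi {N : Matrix (Fin n) (Fin n) ℂ} {w : Fin n → ℂ} {ν : ℂ}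
    (hw : N.mulVec w = ν • w) : (stmtPhi N).mulVec w = stmtPhi ν • w := by
  letI : SeminormedRing (Matrix (Fin n) (Fin n) ℂ) := Matrix.linftyOpSemiNormedRing
  letI : NormedRing (Matrix (Fin n) (Fin n) ℂ) := Matrix.linftyOpNormedRing
  letI : NormedAlgebra ℂ (Matrix (Fin n) (Fin n) ℂ) := Matrix.linftyOpNormedAlgebra
  let L : Matrix (Fin n) (Fin n) ℂ →ₗ[ℂ] (Fin n → ℂ) :=
    { toFun := fun M => M.mulVec w
      map_add' := fun M₁ M₂ => Matrix.add_mulVec M₁ M₂ w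
      map_smul' := fun c M => Matrix.smul_mulVec c M w }
  have hL : Continuous L := LinearMap.continuous_of_finiteDimensional L
  have h1 : (stmtPhi N).mulVec w
      = ∑' k : ℕ, (((k + 1).factorial : ℂ))⁻¹ • ((N ^ k).mulVec w) := by
    have := ((summable_stmtPhi N).hasSum.map L.toAddMonoidHom hL).tsum_eq
    simp [L, Matrix.smul_mulVec] at this
    exact this.symm
  rw [h1]
  have h2 : ∀ k : ℕ, (((k + 1).factorial : ℂ))⁻¹ • ((N ^ k).mulVec w)
      = ((((k + 1).factorial : ℂ))⁻¹ • ν ^ k) • w := by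
    intro k
    rw [stmt_pow_mulVec hw k, smul_smul, smul_eq_mul]
  rw [tsum_congr h2, (summable_stmtPhi ν).tsum_smul_const]
  rfl

lemma stmt_eigen_mem_roots {A : Matrix (Fin n) (Fin n) ℂ} {μ : ℂ} {w : Fin n → ℂ}
    (hw : w ≠ 0) (h : A.mulVec w = μ • w) : μ ∈ A.charpoly.roots := by
  rw [mem_roots A.charpoly_monic.ne_zero]
  have hdet : (Matrix.scalar (Fin n) μ - A).det = 0 := by
    rw [← Matrix.exists_mulVec_eq_zero_iff]
    refine ⟨w, hw, ?_⟩
    rw [Matrix.sub_mulVec, h]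
    have : (Matrix.scalar (Fin n) μ).mulVec w = μ • w := by
      ext i
      simp [Matrix.mulVec_diagonal, Pi.algebraMap_apply, Algebra.algebraMap_self_apply]
    rw [this, sub_self]
  rw [IsRoot, Matrix.charpoly, eval_det, matPolyEquiv_charmatrix]
  simpa using hdet

lemma stmt_exp_eq (A : Matrix (Fin n) (Fin n) ℂ) (lam c : ℂ) :
    NormedSpace.exp (c • A) - Complex.exp (c * lam) • (1 : Matrix (Fin n) (Fin n) ℂ)
      = (A - lam • 1) * ((Complex.exp (c * lam) * c) • stmtPhi (c • (A - lam • 1))) := by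
  letI : SeminormedRing (Matrix (Fin n) (Fin n) ℂ) := Matrix.linftyOpSemiNormedRing
  letI : NormedRing (Matrix (Fin n) (Fin n) ℂ) := Matrix.linftyOpNormedRing
  letI : NormedAlgebra ℂ (Matrix (Fin n) (Fin n) ℂ) := Matrix.linftyOpNormedAlgebra
  set N : Matrix (Fin n) (Fin n) ℂ := A - lam • 1 with hN
  have hsplit : c • A = c • N + (c * lam) • (1 : Matrix (Fin n) (Fin n) ℂ) := by
    rw [hN, smul_sub, smul_smul, sub_add_cancel]
  have hcomm : Commute (c • N) ((c * lam) • (1 : Matrix (Fin n) (Fin n) ℂ)) :=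
    ((Commute.one_right N).smul_left c).smul_right (c * lam)
  have hexp1 : exp ((c * lam) • (1 : Matrix (Fin n) (Fin n) ℂ))
      = Complex.exp (c * lam) • 1 := by
    erw [← Algebra.algebraMap_eq_smul_one, ← algebraMap_exp_comm, ← Complex.exp_eq_exp_ℂ,
      Algebra.algebraMap_eq_smul_one]
  rw [hsplit, Matrix.exp_add_of_commute _ _ hcomm, hexp1]
  erw [exp_eq_one_add_mul_stmtPhi (c • N)]
  rw [
    mul_smul_comm, mul_one, smul_add, add_sub_cancel_left, smul_mul_assoc, smul_smul,
    mul_smul_comm]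
  rfl

end Stmt14Aux

theorem stmt14 (n : ℕ) (A : Matrix (Fin n) (Fin n) ℂ)
    (hint : ∀ lam mu : ℂ, lam ∈ A.charpoly.roots → mu ∈ A.charpoly.roots →
      (∃ z : ℤ, lam - mu = (z : ℂ)) → lam = mu) :
    ∀ lam ∈ A.charpoly.roots, ∀ k : ℕ, 1 ≤ k →
      ((A - lam • (1 : Matrix (Fin n) (Fin n) ℂ)) ^ k).rank
          - ((A - lam • (1 : Matrix (Fin n) (Fin n) ℂ)) ^ (k + 1)).rank
        = ((NormedSpace.exp ((2 * (Real.pi : ℂ) * Complex.I) • A)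
              - Complex.exp (2 * (Real.pi : ℂ) * Complex.I * lam)
                  • (1 : Matrix (Fin n) (Fin n) ℂ)) ^ k).rank
          - ((NormedSpace.exp ((2 * (Real.pi : ℂ) * Complex.I) • A)
              - Complex.exp (2 * (Real.pi : ℂ) * Complex.I * lam)
                  • (1 : Matrix (Fin n) (Fin n) ℂ)) ^ (k + 1)).rank := by
  intro lam hlam k hk
  set c : ℂ := 2 * (Real.pi : ℂ) * Complex.I with hc
  have hc0 : c ≠ 0 := by
    simp [hc, Real.pi_ne_zero, Complex.I_ne_zero, Complex.ofReal_ne_zero]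
  set N : Matrix (Fin n) (Fin n) ℂ := A - lam • 1 with hN
  set P : Matrix (Fin n) (Fin n) ℂ := stmtPhi (c • N) with hP
  set F : Matrix (Fin n) (Fin n) ℂ := (Complex.exp (c * lam) * c) • P with hF
  have hM : NormedSpace.exp (c • A) - Complex.exp (c * lam) • (1 : Matrix (Fin n) (Fin n) ℂ)
      = N * F := stmt_exp_eq A lam c
  -- A commutes with P
  have hAN : Commute A N := (Commute.refl A).sub_right ((Commute.one_right A).smul_right lam)
  have hAP : Commute A P := stmt_commute_phi (hAN.smul_right c)
  -- P has nonzero determinant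
  have hφdet : P.det ≠ 0 := by
    intro h0
    obtain ⟨v, hv0, hv⟩ := (Matrix.exists_mulVec_eq_zero_iff).2 h0
    set K := LinearMap.ker P.mulVecLin with hK
    have hker : ∀ x ∈ K, A.mulVec x ∈ K := by
      intro x hx
      rw [hK, LinearMap.mem_ker, Matrix.mulVecLin_apply] at hx ⊢
      rw [Matrix.mulVec_mulVec, ← hAP.eq, ← Matrix.mulVec_mulVec, hx, Matrix.mulVec_zero]
    have hvK : v ∈ K := by
      rw [hK, LinearMap.mem_ker, Matrix.mulVecLin_apply]; exact hv
    haveI : Nontrivial K := ⟨⟨⟨v, hvK⟩, 0, fun h => hv0 (congrArg Subtype.val h)⟩⟩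
    let f : Module.End ℂ K := A.mulVecLin.restrict (fun x hx => hker x hx)
    obtain ⟨μ, hμ⟩ := Module.End.exists_eigenvalue f
    obtain ⟨w, hw⟩ := hμ.exists_hasEigenvector
    have hw0 : (w : Fin n → ℂ) ≠ 0 := fun h => hw.right (ZeroMemClass.coe_eq_zero.mp h)
    have hAw : A.mulVec (w : Fin n → ℂ) = μ • (w : Fin n → ℂ) := by
      have h1 : ((f w : K) : Fin n → ℂ) = A.mulVec (w : Fin n → ℂ) := rfl
      rw [← h1, hw.apply_eq_smul]
      rfl
    have hμroot : μ ∈ A.charpoly.roots := stmt_eigen_mem_roots hw0 hAw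
    have hNw : N.mulVec (w : Fin n → ℂ) = (μ - lam) • (w : Fin n → ℂ) := by
      rw [hN, Matrix.sub_mulVec, hAw, Matrix.smul_mulVec, Matrix.one_mulVec, sub_smul]
    have hcNw : (c • N).mulVec (w : Fin n → ℂ) = (c * (μ - lam)) • (w : Fin n → ℂ) := by
      rw [Matrix.smul_mulVec, hNw, smul_smul]
    have hPw : P.mulVec (w : Fin n → ℂ) = 0 := w.property
    have hφν : stmtPhi (c * (μ - lam)) = 0 := by
      have h2 : stmtPhi (c * (μ - lam)) • (w : Fin n → ℂ) = 0 := by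
        rw [← stmt_mulVec_stmtPhi hcNw, ← hP, hPw]
      rcases smul_eq_zero.mp h2 with h3 | h3
      · exact h3
      · exact absurd h3 hw0
    by_cases hmul : μ = lam
    · rw [hmul, sub_self, mul_zero] at hφν
      exact one_ne_zero (hφν ▸ stmtPhi_zero.symm)
    · have hexp : Complex.exp (c * (μ - lam)) = 1 := by
        rw [stmtPhi_complex_exp, hφν, mul_zero, add_zero]
      obtain ⟨m, hm⟩ := Complex.exp_eq_one_iff.mp hexp
      have hdiff : μ - lam = (m : ℂ) := by
        have h4 : c * (μ - lam) = c * (m : ℂ) := by rw [hm, hc]; ring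
        exact mul_left_cancel₀ hc0 h4
      exact hmul (hint μ lam hμroot hlam ⟨m, hdiff⟩)
  have hFdet : IsUnit F.det := by
    rw [hF, Matrix.det_smul, isUnit_iff_ne_zero]
    exact mul_ne_zero (pow_ne_zero (Fintype.card (Fin n)) (mul_ne_zero (Complex.exp_ne_zero _) hc0)) hφdet
  have hNF : Commute N F :=
    (stmt_commute_phi ((Commute.refl N).smul_right c)).smul_right (Complex.exp (c * lam) * c)
  have hrank : ∀ j : ℕ,
      ((NormedSpace.exp (c • A) - Complex.exp (c * lam) • (1 : Matrix (Fin n) (Fin n) ℂ)) ^ j).rank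
        = (N ^ j).rank := by
    intro j
    rw [hM, hNF.mul_pow, Matrix.rank_mul_eq_left_of_isUnit_det]
    rw [Matrix.det_pow]
    exact hFdet.pow j
  rw [hrank k, hrank (k + 1)]
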